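/- Let l₁, l₂, l₃ ∈ ℂ be nonzero. Then T possesses no nonzero proper principal 𝔇-stable ideal. -/

import Mathlib

noncomputable section

open MvPolynomial

abbrev R3 : Type := MvPolynomial (Fin 3) ℂ

def chi : R3 :=
  C (484/49) * (C 50000 * (X 1) ^ 6 - C 1000 * (X 0) ^ 2 * X 2 * (X 1) ^ 4
    + (X 0) ^ 5 * (X 1) ^ 4 - C 2 * (X 0) ^ 4 * (X 2) ^ 2 * (X 1) ^ 2
    + C 1800 * X 0 * (X 2) ^ 3 * (X 1) ^ 2 + (X 0) ^ 3 * (X 2) ^ 4 - C 864 * (X 2) ^ 5)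

/-- The relation `W² - χ` inside `ℂ[X, Y, Z, W]`. -/
def relIdeal : Ideal (MvPolynomial (Fin 4) ℂ) :=
  Ideal.span {(X 3) ^ 2 - (rename Fin.castSucc chi)}

/-- `T = ℂ[X, Y, Z, W]/(W² - χ)`. -/
abbrev T : Type := MvPolynomial (Fin 4) ℂ ⧸ relIdeal

def mkT : MvPolynomial (Fin 4) ℂ →ₐ[ℂ] T := Ideal.Quotient.mkₐ ℂ relIdeal

def xT : T := mkT (X 0)
def yT : T := mkT (X 1)
def zT : T := mkT (X 2)
/-- `w`, the class of `W` in `T`. -/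
def wT : T := mkT (X 3)

/-- The canonical map `ℂ[X, Y, Z] → T`. -/
def toT : R3 →ₐ[ℂ] T := mkT.comp (rename Fin.castSucc)

/-- The structure map `ℂ → T`. -/
def CT : ℂ → T := algebraMap ℂ T

/-- `D` is the extension of `d*` to `T`. -/
def IsDStarT (D : Derivation ℂ T T) : Prop :=
  D xT = CT (4/5) * yT * (xT ^ 3 - CT 1050 * zT) ∧
  D yT = CT (1/10) * xT * (CT 7 * zT ^ 2 - CT 15 * xT * yT ^ 2) ∧
  D zT = -(CT (2/5)) * yT * (xT ^ 2 * zT + CT 875 * yT ^ 2) ∧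
  D wT = -(xT ^ 2 * yT) * wT

/-- `D` is the extension of `e*` to `T`. -/
def IsEStarT (D : Derivation ℂ T T) : Prop :=
  D xT = -(CT 1152) * zT ^ 2 + CT 240 * xT * yT ^ 2 + CT (4/5) * xT ^ 3 * zT ∧
  D yT = yT * (-(CT (6/5)) * xT ^ 2 * zT + CT 200 * yT ^ 2) ∧
  D zT = -(CT 240) * yT ^ 2 * zT - CT (8/5) * xT ^ 2 * zT ^ 2 + CT (4/5) * xT ^ 3 * yT ^ 2 ∧
  D wT = -(CT 2) * (xT ^ 2 * zT - CT 300 * yT ^ 2) * wT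

/-- `D` is the extension of `f*` to `T`. -/
def IsFStarT (D : Derivation ℂ T T) : Prop :=
  D xT = yT * (CT 550 * yT ^ 2 - CT (4/5) * xT ^ 2 * zT) ∧
  D yT = zT * (CT (7/2) * xT * yT ^ 2 - CT (33/10) * zT ^ 2) ∧
  D zT = yT * (CT (11/4) * xT ^ 2 * yT ^ 2 - CT (59/20) * xT * zT ^ 2) ∧
  D wT = -(CT (1/2)) * xT * yT * zT * wT

/-- `D` is the derivation `d_*` attached to the constant `l₁`. -/
def IsDLow (l₁ : ℂ) (D : Derivation ℂ T T) : Prop :=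
  D xT = 0 ∧ D yT = 0 ∧ D zT = CT l₁ * wT ∧ D wT = CT (l₁ / 2) * toT (pderiv 2 chi)

/-- `D` is the derivation `e_*` attached to the constant `l₂`. -/
def IsELow (l₂ : ℂ) (D : Derivation ℂ T T) : Prop :=
  D xT = 0 ∧ D zT = 0 ∧ D yT = CT l₂ * wT ∧ D wT = CT (l₂ / 2) * toT (pderiv 1 chi)

/-- `D` is the derivation `f_*` attached to the constant `l₃`. -/
def IsFLow (l₃ : ℂ) (D : Derivation ℂ T T) : Prop :=
  D yT = 0 ∧ D zT = 0 ∧ D xT = CT l₃ * wT ∧ D wT = CT (l₃ / 2) * toT (pderiv 0 chi)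

/-- `Q` is stable under all six derivations `d₁, d₂, e₁, e₂, f₁, f₂`. -/
def DStableT (dT eT fT dS eS fS : Derivation ℂ T T) (Q : Ideal T) : Prop :=
  (∀ q ∈ Q, (dT + dS) q ∈ Q) ∧ (∀ q ∈ Q, (dT - dS) q ∈ Q) ∧
  (∀ q ∈ Q, (eT + eS) q ∈ Q) ∧ (∀ q ∈ Q, (eT - eS) q ∈ Q) ∧
  (∀ q ∈ Q, (fT + fS) q ∈ Q) ∧ (∀ q ∈ Q, (fT - fS) q ∈ Q)

-- basic lemmas
lemma toT_X0 : toT (X 0) = xT := by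
  simp only [toT, AlgHom.comp_apply, rename_X]; rfl

lemma toT_X1 : toT (X 1) = yT := by
  simp only [toT, AlgHom.comp_apply, rename_X]; rfl

lemma toT_X2 : toT (X 2) = zT := by
  simp only [toT, AlgHom.comp_apply, rename_X]; rfl

lemma toT_C (c : ℂ) : toT (C c) = CT c := by
  have : (C c : R3) = algebraMap ℂ R3 c := rfl
  rw [this, AlgHom.commutes]; rfl

lemma wT_sq : wT ^ 2 = toT chi := by
  have h : mkT ((X 3) ^ 2 - rename Fin.castSucc chi) = 0 := by
    rw [show mkT ((X 3 : MvPolynomial (Fin 4) ℂ) ^ 2 - rename Fin.castSucc chi)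
        = Ideal.Quotient.mk relIdeal ((X 3) ^ 2 - rename Fin.castSucc chi) from rfl,
      Ideal.Quotient.eq_zero_iff_mem]
    exact Ideal.subset_span rfl
  have := h
  rw [map_sub, map_pow, sub_eq_zero] at this
  exact this

lemma T_induction (P : T → Prop) (halg : ∀ c : ℂ, P (algebraMap ℂ T c))
    (hadd : ∀ s t, P s → P t → P (s + t)) (hmul : ∀ s t, P s → P t → P (s * t))
    (hgen : ∀ i : Fin 4, P (mkT (X i))) : ∀ t, P t := by
  intro t
  obtain ⟨p, rfl⟩ := Ideal.Quotient.mkₐ_surjective ℂ relIdeal t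
  show P (mkT p)
  induction p using MvPolynomial.induction_on with
  | C c => rw [show mkT (C c) = algebraMap ℂ T c from mkT.commutes c]; exact halg c
  | add p q hp hq => rw [map_add]; exact hadd _ _ hp hq
  | mul_X p i hp => rw [map_mul]; exact hmul _ _ hp (hgen i)

lemma repr_exists : ∀ t : T, ∃ a b : R3, t = toT a + toT b * wT := by
  apply T_induction
  · intro c
    exact ⟨C c, 0, by rw [toT_C, map_zero, zero_mul, add_zero]; rfl⟩
  · rintro s t ⟨a, b, rfl⟩ ⟨a', b', rfl⟩
    exact ⟨a + a', b + b', by rw [map_add, map_add]; ring⟩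
  · rintro s t ⟨a, b, rfl⟩ ⟨a', b', rfl⟩
    refine ⟨a * a' + b * b' * chi, a * b' + a' * b, ?_⟩
    rw [map_add, map_add, map_mul, map_mul, map_mul, map_mul, map_mul, ← wT_sq]
    ring
  · intro i
    fin_cases i
    · exact ⟨X 0, 0, by rw [toT_X0, map_zero, zero_mul, add_zero]; rfl⟩
    · exact ⟨X 1, 0, by rw [toT_X1, map_zero, zero_mul, add_zero]; rfl⟩
    · exact ⟨X 2, 0, by rw [toT_X2, map_zero, zero_mul, add_zero]; rfl⟩
    · exact ⟨0, 1, by rw [map_zero, map_one, one_mul, zero_add]; rfl⟩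

def psi (n : ℕ) (i : Fin (n + 1)) :
    MvPolynomial (Fin (n + 1)) ℂ ≃ₐ[ℂ] Polynomial (MvPolynomial (Fin n) ℂ) :=
  (renameEquiv ℂ (finSuccEquiv' i)).trans (optionEquivLeft ℂ (Fin n))

lemma psi_X_at (n : ℕ) (i : Fin (n + 1)) : psi n i (X i) = Polynomial.X := by
  simp [psi, renameEquiv_apply, finSuccEquiv'_at, optionEquivLeft_X_none]

lemma psi_X_ne (n : ℕ) (i : Fin (n + 1)) (j : Fin (n + 1)) (h : j ≠ i) :
    ∃ k, psi n i (X j) = Polynomial.C (X k) := by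
  obtain ⟨k, hk⟩ : ∃ k, finSuccEquiv' i j = some k := by
    cases hjk : finSuccEquiv' i j with
    | none =>
      exfalso; apply h
      have := congrArg (finSuccEquiv' i).symm hjk
      rwa [Equiv.symm_apply_apply, ← finSuccEquiv'_at i, Equiv.symm_apply_apply] at this
    | some k => exact ⟨k, rfl⟩
  exact ⟨k, by simp [psi, renameEquiv_apply, hk, optionEquivLeft_X_some]⟩

lemma psi_C (n : ℕ) (i : Fin (n + 1)) (c : ℂ) : psi n i (MvPolynomial.C c) = Polynomial.C (MvPolynomial.C c) := by
  simp [psi, renameEquiv_apply, rename_C, optionEquivLeft_C]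

lemma psi_pderiv (n : ℕ) (i : Fin (n + 1)) (g : MvPolynomial (Fin (n + 1)) ℂ) :
    psi n i (pderiv i g) = Polynomial.derivative (psi n i g) := by
  induction g using MvPolynomial.induction_on with
  | C c => rw [pderiv_C, map_zero, psi_C, Polynomial.derivative_C]
  | add p q hp hq => rw [map_add, map_add, map_add, Polynomial.derivative_add, hp, hq]
  | mul_X p j hp =>
    rw [pderiv_mul, map_add, map_mul, map_mul, map_mul, Polynomial.derivative_mul, ← hp]
    rcases eq_or_ne j i with rfl | hne
    · rw [pderiv_X_self, map_one, mul_one, psi_X_at, Polynomial.derivative_X, mul_one]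
    · obtain ⟨k, hk⟩ := psi_X_ne n i j hne
      rw [pderiv_X_of_ne hne, map_zero, mul_zero, add_zero, hk, Polynomial.derivative_C,
        mul_zero, add_zero]

/-- Key degree lemma: if `C l * ∂ᵢ g = d * g` with `l ≠ 0`, then `∂ᵢ g = 0`. -/
lemma pderiv_eq_zero_of_eq_mul (n : ℕ) (i : Fin (n + 1)) (g d : MvPolynomial (Fin (n + 1)) ℂ)
    (l : ℂ) (hl : l ≠ 0) (h : MvPolynomial.C l * pderiv i g = d * g) : pderiv i g = 0 := by
  by_contra hne
  set G := psi n i g with hG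
  have hd : Polynomial.derivative G ≠ 0 := by
    rw [← psi_pderiv]
    simpa using hne
  have heq : Polynomial.C (MvPolynomial.C l) * Polynomial.derivative G = psi n i d * G := by
    have := congrArg (psi n i) h
    rwa [map_mul, map_mul, psi_C, psi_pderiv] at this
  have hCl : (MvPolynomial.C l : MvPolynomial (Fin n) ℂ) ≠ 0 := by
    simpa using hl
  have hlhs : (Polynomial.C (MvPolynomial.C l) * Polynomial.derivative G).natDegree
      = (Polynomial.derivative G).natDegree := Polynomial.natDegree_C_mul hCl
  have hG0 : G ≠ 0 := by
    intro h0
    rw [h0, Polynomial.derivative_zero] at hd; exact hd rfl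
  have hd0 : psi n i d ≠ 0 := by
    intro h0
    rw [h0, zero_mul] at heq
    exact (mul_ne_zero (Polynomial.C_ne_zero.2 hCl) hd) heq
  have hrhs : (psi n i d * G).natDegree = (psi n i d).natDegree + G.natDegree :=
    Polynomial.natDegree_mul hd0 hG0
  have hGdeg : G.natDegree ≠ 0 := by
    intro h0
    have := Polynomial.eq_C_of_natDegree_eq_zero h0
    rw [this, Polynomial.derivative_C] at hd; exact hd rfl
  have hlt := Polynomial.natDegree_derivative_lt hGdeg
  rw [heq, hrhs] at hlhs
  omega

lemma coeff_pderiv {n : ℕ} (i : Fin n) (m : Fin n →₀ ℕ) (g : MvPolynomial (Fin n) ℂ) :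
    MvPolynomial.coeff m (pderiv i g) = ((m i : ℂ) + 1) * MvPolynomial.coeff (m + Finsupp.single i 1) g := by
  induction g using MvPolynomial.induction_on' with
  | add p q hp hq => rw [map_add, MvPolynomial.coeff_add, MvPolynomial.coeff_add, hp, hq, mul_add]
  | monomial s a =>
    rw [pderiv_monomial, MvPolynomial.coeff_monomial, MvPolynomial.coeff_monomial]
    by_cases hs : s i = 0
    · have h1 : ¬ (s = m + Finsupp.single i 1) := by
        intro h
        have := congrArg (fun f => f i) h
        simp at this
        omega
      rw [hs, if_neg h1, Nat.cast_zero, mul_zero, mul_zero, ite_self]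
    · have hle : Finsupp.single i 1 ≤ s := by
        rw [Finsupp.single_le_iff]; omega
      have hiff : (m = s - Finsupp.single i 1) ↔ (m + Finsupp.single i 1 = s) :=
        eq_tsub_iff_add_eq_of_le hle
      by_cases hm : m + Finsupp.single i 1 = s
      · rw [if_pos (hiff.2 hm).symm, if_pos hm.symm]
        have hmi : m i + 1 = s i := by
          have := congrArg (fun f => f i) hm
          simpa using this
        rw [← hmi]
        push_cast
        ring
      · rw [if_neg (fun h => hm (hiff.1 h.symm)), if_neg (fun h => hm h.symm), mul_zero]

lemma eq_C_of_pderiv_eq_zero {n : ℕ} (g : MvPolynomial (Fin n) ℂ)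
    (h : ∀ i : Fin n, pderiv i g = 0) : g = MvPolynomial.C (MvPolynomial.coeff 0 g) := by
  apply MvPolynomial.ext
  intro m
  rcases eq_or_ne m 0 with rfl | hm
  · rw [MvPolynomial.coeff_C, if_pos rfl]
  · rw [MvPolynomial.coeff_C, if_neg (Ne.symm hm)]
    obtain ⟨i, hi⟩ : ∃ i, m i ≠ 0 := by
      by_contra hc
      push_neg at hc
      exact hm (Finsupp.ext hc)
    have hle : Finsupp.single i 1 ≤ m := by rw [Finsupp.single_le_iff]; omega
    set m' : Fin n →₀ ℕ := m - Finsupp.single i 1 with hm'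
    have hrepr : m' + Finsupp.single i 1 = m := tsub_add_cancel_of_le hle
    have hc := coeff_pderiv i m' g
    rw [h i, MvPolynomial.coeff_zero, hrepr] at hc
    have hne : ((m' i : ℕ) : ℂ) + 1 ≠ 0 := by
      exact_mod_cast Nat.succ_ne_zero (m' i)
    exact (mul_eq_zero.1 hc.symm).resolve_left hne
-- Stage 3
lemma psi_X_castSucc {n : ℕ} (j : Fin n) :
    psi n (Fin.last n) (X (Fin.castSucc j)) = Polynomial.C (X j) := by
  show (optionEquivLeft ℂ (Fin n)) (rename (finSuccEquiv' (Fin.last n)) (X (Fin.castSucc j))) = _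
  rw [rename_X, finSuccEquiv'_last_apply_castSucc, optionEquivLeft_X_some]

lemma psi_rename {n : ℕ} (p : MvPolynomial (Fin n) ℂ) :
    psi n (Fin.last n) (rename Fin.castSucc p) = Polynomial.C p := by
  induction p using MvPolynomial.induction_on with
  | C c => rw [rename_C, psi_C]
  | add p q hp hq => rw [map_add, map_add, hp, hq, map_add]
  | mul_X p j hp =>
    rw [map_mul, map_mul, hp, rename_X, psi_X_castSucc, ← Polynomial.C_mul]

lemma repr_zero (a b : R3) (h : toT a + toT b * wT = 0) : a = 0 ∧ b = 0 := by
  have hmem : rename Fin.castSucc a + rename Fin.castSucc b * X 3 ∈ relIdeal := by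
    rw [← Ideal.Quotient.eq_zero_iff_mem]
    exact h
  rw [relIdeal, Ideal.mem_span_singleton] at hmem
  obtain ⟨q, hq⟩ := hmem
  have happ := congrArg (psi 3 (Fin.last 3)) hq
  rw [map_add, map_mul, map_mul, map_sub, map_pow, psi_rename, psi_rename,
    show (3 : Fin 4) = Fin.last 3 from rfl, psi_X_at, psi_rename] at happ
  set Q := psi 3 (Fin.last 3) q with hQ
  have hQ0 : Q = 0 := by
    by_contra hQ0
    have hmonic : ((Polynomial.X : Polynomial R3) ^ 2 - Polynomial.C chi).Monic :=
      Polynomial.monic_X_pow_sub_C chi two_ne_zero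
    have hdegR : ((Polynomial.X ^ 2 - Polynomial.C chi) * Q).natDegree = 2 + Q.natDegree := by
      rw [hmonic.natDegree_mul' hQ0, Polynomial.natDegree_X_pow_sub_C]
    have hdegL : (Polynomial.C a + Polynomial.C b * Polynomial.X).natDegree ≤ 1 := by
      compute_degree
    rw [happ, hdegR] at hdegL
    omega
  rw [hQ0, mul_zero] at happ
  constructor
  · have := congrArg (fun P => Polynomial.coeff P 0) happ
    simpa using this
  · have := congrArg (fun P => Polynomial.coeff P 1) happ
    simpa using this

lemma chi_natDegree : (psi 2 (Fin.last 2) chi).natDegree = 5 := by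
  have h0 : (X 0 : R3) = X (Fin.castSucc 0) := rfl
  have h1 : (X 1 : R3) = X (Fin.castSucc 1) := rfl
  have h2 : (X 2 : R3) = X (Fin.last 2) := rfl
  rw [chi, h0, h1, h2]
  simp only [map_mul, map_add, map_sub, map_pow, psi_C, psi_X_castSucc, psi_X_at]
  compute_degree!
-- Stage 4: not_square, sigma
lemma not_square (a b : R3) (h : a ^ 2 = b ^ 2 * chi) : a = 0 ∧ b = 0 := by
  have hb : b = 0 := by
    by_contra hb
    set e := psi 2 (Fin.last 2) with he
    have hB : e b ≠ 0 := fun h0 => hb (by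
      have := congrArg e.symm h0
      simpa [he] using this)
    have hchi0 : e chi ≠ 0 := by
      intro h0
      have := chi_natDegree
      rw [← he, h0, Polynomial.natDegree_zero] at this
      exact (by omega : (0 : ℕ) ≠ 5) this
    have hA : e a ≠ 0 := by
      intro h0
      have := congrArg e h
      rw [map_pow, map_mul, map_pow, h0, zero_pow two_ne_zero] at this
      exact (mul_ne_zero (pow_ne_zero 2 hB) hchi0) this.symm
    have := congrArg e h
    rw [map_pow, map_mul, map_pow] at this
    have hdeq := congrArg Polynomial.natDegree this
    rw [Polynomial.natDegree_pow, Polynomial.natDegree_mul (pow_ne_zero 2 hB) hchi0,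
      Polynomial.natDegree_pow] at hdeq
    have h5 : (e chi).natDegree = 5 := chi_natDegree
    omega
  subst hb
  rw [zero_pow two_ne_zero, zero_mul, pow_eq_zero_iff two_ne_zero] at h
  exact ⟨h, rfl⟩

-- the involution sigma
def vneg : Fin 4 → MvPolynomial (Fin 4) ℂ := ![X 0, X 1, X 2, -X 3]

def sig0 : MvPolynomial (Fin 4) ℂ →ₐ[ℂ] MvPolynomial (Fin 4) ℂ := aeval vneg

lemma sig0_X_castSucc (j : Fin 3) : sig0 (X (Fin.castSucc j)) = X (Fin.castSucc j) := by
  fin_cases j <;> simp [sig0, vneg, aeval_X] <;> rfl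

lemma sig0_X3 : sig0 (X 3) = -X 3 := by
  simp [sig0, vneg, aeval_X]

lemma sig0_rename (p : R3) : sig0 (rename Fin.castSucc p) = rename Fin.castSucc p := by
  induction p using MvPolynomial.induction_on with
  | C c => rw [rename_C]; simp [sig0]
  | add p q hp hq => rw [map_add, map_add, hp, hq]
  | mul_X p j hp => rw [map_mul, map_mul, hp, rename_X, sig0_X_castSucc]

lemma sig0_gen : sig0 ((X 3 : MvPolynomial (Fin 4) ℂ) ^ 2 - rename Fin.castSucc chi)
    = (X 3) ^ 2 - rename Fin.castSucc chi := by
  rw [map_sub, map_pow, sig0_X3, sig0_rename, neg_pow, neg_one_sq]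
  ring_nf

def sigT : T →ₐ[ℂ] T := Ideal.Quotient.liftₐ relIdeal (mkT.comp sig0) (by
  intro p hp
  rw [relIdeal, Ideal.mem_span_singleton] at hp
  obtain ⟨q, rfl⟩ := hp
  rw [AlgHom.comp_apply, map_mul, sig0_gen, map_mul]
  have : mkT ((X 3 : MvPolynomial (Fin 4) ℂ) ^ 2 - rename Fin.castSucc chi) = 0 := by
    rw [show mkT ((X 3 : MvPolynomial (Fin 4) ℂ) ^ 2 - rename Fin.castSucc chi)
        = Ideal.Quotient.mk relIdeal _ from rfl, Ideal.Quotient.eq_zero_iff_mem]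
    exact Ideal.subset_span rfl
  rw [this, zero_mul])

lemma sigT_mk (p : MvPolynomial (Fin 4) ℂ) : sigT (mkT p) = mkT (sig0 p) := by
  rw [sigT]
  exact Ideal.Quotient.liftₐ_apply _ _ _ _

lemma sigT_toT (p : R3) : sigT (toT p) = toT p := by
  show sigT (mkT (rename Fin.castSucc p)) = mkT (rename Fin.castSucc p)
  rw [sigT_mk, sig0_rename]

lemma sigT_wT : sigT wT = -wT := by
  show sigT (mkT (X 3)) = -(mkT (X 3))
  rw [sigT_mk, sig0_X3, map_neg]

lemma sigT_xT : sigT xT = xT := by rw [show xT = toT (X 0) from toT_X0.symm, sigT_toT]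
lemma sigT_yT : sigT yT = yT := by rw [show yT = toT (X 1) from toT_X1.symm, sigT_toT]
lemma sigT_zT : sigT zT = zT := by rw [show zT = toT (X 2) from toT_X2.symm, sigT_toT]

lemma sigT_CT (c : ℂ) : sigT (CT c) = CT c := sigT.commutes c
-- Stage 5: anticommutation and chain rule
lemma anticomm (D : Derivation ℂ T T)
    (hx : D (sigT xT) = - sigT (D xT)) (hy : D (sigT yT) = - sigT (D yT))
    (hz : D (sigT zT) = - sigT (D zT)) (hw : D (sigT wT) = - sigT (D wT)) :
    ∀ t : T, D (sigT t) = - sigT (D t) := by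
  apply T_induction (P := fun t => D (sigT t) = - sigT (D t))
  · intro c
    rw [sigT.commutes c, Derivation.map_algebraMap, map_zero, neg_zero]
  · intro s t hs ht
    rw [map_add, map_add, map_add, map_add, hs, ht, neg_add]
  · intro s t hs ht
    rw [map_mul, Derivation.leibniz, Derivation.leibniz, smul_eq_mul, smul_eq_mul,
      smul_eq_mul, smul_eq_mul, hs, ht, map_add, map_mul, map_mul]
    ring
  · intro i
    fin_cases i
    · exact hx
    · exact hy
    · exact hz
    · exact hw

lemma deriv_toT (D : Derivation ℂ T T) (g : R3) :
    D (toT g) = toT (pderiv 0 g) * D xT + toT (pderiv 1 g) * D yT + toT (pderiv 2 g) * D zT := by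
  induction g using MvPolynomial.induction_on with
  | C c =>
    rw [show toT (C c) = algebraMap ℂ T c from toT_C c, Derivation.map_algebraMap,
      pderiv_C, pderiv_C, pderiv_C, map_zero, zero_mul, zero_mul, zero_mul, add_zero, add_zero]
  | add p q hp hq =>
    simp only [map_add, hp, hq]
    ring
  | mul_X p j hp =>
    have h01 : (0 : Fin 3) ≠ 1 := by decide
    have h02 : (0 : Fin 3) ≠ 2 := by decide
    have h10 : (1 : Fin 3) ≠ 0 := by decide
    have h12 : (1 : Fin 3) ≠ 2 := by decide
    have h20 : (2 : Fin 3) ≠ 0 := by decide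
    have h21 : (2 : Fin 3) ≠ 1 := by decide
    fin_cases j
    · show D (toT (p * X 0)) = toT (pderiv 0 (p * X 0)) * D xT
          + toT (pderiv 1 (p * X 0)) * D yT + toT (pderiv 2 (p * X 0)) * D zT
      rw [map_mul, toT_X0, Derivation.leibniz, smul_eq_mul, smul_eq_mul, hp,
        pderiv_mul, pderiv_mul, pderiv_mul, pderiv_X_self, pderiv_X_of_ne h01,
        pderiv_X_of_ne h02]
      simp only [mul_one, mul_zero, add_zero, map_add, map_mul, toT_X0, toT_X1, toT_X2]
      ring
    · show D (toT (p * X 1)) = toT (pderiv 0 (p * X 1)) * D xT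
          + toT (pderiv 1 (p * X 1)) * D yT + toT (pderiv 2 (p * X 1)) * D zT
      rw [map_mul, toT_X1, Derivation.leibniz, smul_eq_mul, smul_eq_mul, hp,
        pderiv_mul, pderiv_mul, pderiv_mul, pderiv_X_self, pderiv_X_of_ne h10,
        pderiv_X_of_ne h12]
      simp only [mul_one, mul_zero, add_zero, map_add, map_mul, toT_X0, toT_X1, toT_X2]
      ring
    · show D (toT (p * X 2)) = toT (pderiv 0 (p * X 2)) * D xT
          + toT (pderiv 1 (p * X 2)) * D yT + toT (pderiv 2 (p * X 2)) * D zT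
      rw [map_mul, toT_X2, Derivation.leibniz, smul_eq_mul, smul_eq_mul, hp,
        pderiv_mul, pderiv_mul, pderiv_mul, pderiv_X_self, pderiv_X_of_ne h20,
        pderiv_X_of_ne h21]
      simp only [mul_one, mul_zero, add_zero, map_add, map_mul, toT_X0, toT_X1, toT_X2]
      ring
-- Stage 6: main steps
lemma half_extract {D E : Derivation ℂ T T} {I : Ideal T} {q : T}
    (h1 : (D + E) q ∈ I) (h2 : (D - E) q ∈ I) : E q ∈ I := by
  have key : E q = CT (1/2) * ((D + E) q - (D - E) q) := by
    rw [Derivation.add_apply, Derivation.sub_apply,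
      show D q + E q - (D q - E q) = E q + E q by ring]
    calc E q = CT 1 * E q := by rw [CT, map_one, one_mul]
    _ = (CT (1/2) + CT (1/2)) * E q := by rw [CT, ← map_add]; norm_num
    _ = CT (1/2) * (E q + E q) := by ring
  rw [key]
  exact I.mul_mem_left _ (I.sub_mem h1 h2)

lemma key_step (D : Derivation ℂ T T) (I : Ideal T) (q₀ : T) (hI : I = Ideal.span {q₀})
    (hmem : D q₀ ∈ I)
    (hanti : ∀ t, D (sigT t) = - sigT (D t))
    (i : Fin 3) (l : ℂ) (hl : l ≠ 0)
    (hchain : ∀ p : R3, D (toT p) = toT (pderiv i p) * (CT l * wT))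
    (g : R3) (hg : toT g = q₀ * sigT q₀) :
    pderiv i g = 0 := by
  rw [hI] at hmem
  rw [Ideal.mem_span_singleton] at hmem
  obtain ⟨td, htd⟩ := hmem
  have key : D (toT g) = (td - sigT td) * toT g := by
    rw [hg, Derivation.leibniz, smul_eq_mul, smul_eq_mul, hanti q₀, htd, map_mul]
    ring
  obtain ⟨c, d, hcd⟩ := repr_exists td
  have hsigtd : sigT td = toT c - toT d * wT := by
    rw [hcd, map_add, map_mul, sigT_toT, sigT_toT, sigT_wT]
    ring
  have heq0 : toT 0 + toT (C l * pderiv i g - C 2 * (d * g)) * wT = 0 := by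
    rw [map_zero, zero_add, map_sub, sub_mul, sub_eq_zero]
    have hL : toT (C l * pderiv i g) * wT = D (toT g) := by
      rw [hchain g, map_mul, toT_C]
      ring
    have hR : toT (C 2 * (d * g)) * wT = (td - sigT td) * toT g := by
      have h2 : CT 2 = (2 : T) := by rw [CT, map_ofNat]
      rw [hsigtd, hcd, map_mul, map_mul, toT_C, h2]
      ring
    rw [hL, hR, key]
  have hzero := (repr_zero _ _ heq0).2
  rw [sub_eq_zero] at hzero
  exact pderiv_eq_zero_of_eq_mul 2 i g (C 2 * d) l hl (by rw [hzero]; ring)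

/-- For nonzero `l₁, l₂, l₃ ∈ ℂ`, the ring `T` possesses no nonzero proper
principal `𝔇`-stable ideal. -/
theorem no_nonzero_proper_principal_Dstable_ideal
    (l₁ l₂ l₃ : ℂ) (h1 : l₁ ≠ 0) (h2 : l₂ ≠ 0) (h3 : l₃ ≠ 0)
    (dT eT fT dS eS fS : Derivation ℂ T T)
    (hdT : IsDStarT dT) (heT : IsEStarT eT) (hfT : IsFStarT fT)
    (hdS : IsDLow l₁ dS) (heS : IsELow l₂ eS) (hfS : IsFLow l₃ fS) :
    ¬ ∃ I : Ideal T, I ≠ ⊥ ∧ I ≠ ⊤ ∧ I.IsPrincipal ∧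
      DStableT dT eT fT dS eS fS I := by
  rintro ⟨I, hbot, htop, hprin, hstab⟩
  obtain ⟨q₀, hIq0⟩ := hprin
  have hIq : I = Ideal.span {q₀} := hIq0
  obtain ⟨hd1, hd2, he1, he2, hf1, hf2⟩ := hstab
  have hq₀I : q₀ ∈ I := by rw [hIq]; exact Ideal.mem_span_singleton_self q₀
  have hq₀ne : q₀ ≠ 0 := by
    rintro rfl
    exact hbot (by rw [hIq, Ideal.span_singleton_eq_bot])
  have hdSm : dS q₀ ∈ I := half_extract (hd1 q₀ hq₀I) (hd2 q₀ hq₀I)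
  have heSm : eS q₀ ∈ I := half_extract (he1 q₀ hq₀I) (he2 q₀ hq₀I)
  have hfSm : fS q₀ ∈ I := half_extract (hf1 q₀ hq₀I) (hf2 q₀ hq₀I)
  obtain ⟨hdx, hdy, hdz, hdw⟩ := hdS
  obtain ⟨hex, hez, hey, hew⟩ := heS
  obtain ⟨hfy, hfz, hfx, hfw⟩ := hfS
  have hadS : ∀ t, dS (sigT t) = - sigT (dS t) := by
    apply anticomm
    · rw [sigT_xT, hdx, map_zero, neg_zero]
    · rw [sigT_yT, hdy, map_zero, neg_zero]
    · rw [sigT_zT, hdz, map_mul, sigT_CT, sigT_wT]; ring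
    · rw [sigT_wT, Derivation.map_neg, hdw, map_mul, sigT_CT, sigT_toT]
  have haeS : ∀ t, eS (sigT t) = - sigT (eS t) := by
    apply anticomm
    · rw [sigT_xT, hex, map_zero, neg_zero]
    · rw [sigT_yT, hey, map_mul, sigT_CT, sigT_wT]; ring
    · rw [sigT_zT, hez, map_zero, neg_zero]
    · rw [sigT_wT, Derivation.map_neg, hew, map_mul, sigT_CT, sigT_toT]
  have hafS : ∀ t, fS (sigT t) = - sigT (fS t) := by
    apply anticomm
    · rw [sigT_xT, hfx, map_mul, sigT_CT, sigT_wT]; ring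
    · rw [sigT_yT, hfy, map_zero, neg_zero]
    · rw [sigT_zT, hfz, map_zero, neg_zero]
    · rw [sigT_wT, Derivation.map_neg, hfw, map_mul, sigT_CT, sigT_toT]
  obtain ⟨a, b, hab⟩ := repr_exists q₀
  set g : R3 := a^2 - b^2 * chi with hgdef
  have hsq : sigT q₀ = toT a - toT b * wT := by
    rw [hab, map_add, map_mul, sigT_toT, sigT_toT, sigT_wT]; ring
  have hg : toT g = q₀ * sigT q₀ := by
    rw [hgdef, hsq, hab, map_sub, map_mul, map_pow, map_pow, ← wT_sq]; ring
  have hcd : ∀ p : R3, dS (toT p) = toT (pderiv 2 p) * (CT l₁ * wT) := by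
    intro p; rw [deriv_toT dS p, hdx, hdy, hdz, mul_zero, mul_zero, zero_add, zero_add]
  have hce : ∀ p : R3, eS (toT p) = toT (pderiv 1 p) * (CT l₂ * wT) := by
    intro p; rw [deriv_toT eS p, hex, hey, hez, mul_zero, mul_zero, zero_add, add_zero]
  have hcf : ∀ p : R3, fS (toT p) = toT (pderiv 0 p) * (CT l₃ * wT) := by
    intro p; rw [deriv_toT fS p, hfx, hfy, hfz, mul_zero, mul_zero, add_zero, add_zero]
  have hp2 : pderiv 2 g = 0 := key_step dS I q₀ hIq hdSm hadS 2 l₁ h1 hcd g hg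
  have hp1 : pderiv 1 g = 0 := key_step eS I q₀ hIq heSm haeS 1 l₂ h2 hce g hg
  have hp0 : pderiv 0 g = 0 := key_step fS I q₀ hIq hfSm hafS 0 l₃ h3 hcf g hg
  have hgC : g = MvPolynomial.C (MvPolynomial.coeff 0 g) := by
    apply eq_C_of_pderiv_eq_zero
    intro i; fin_cases i
    · exact hp0
    · exact hp1
    · exact hp2
  rcases eq_or_ne (MvPolynomial.coeff 0 g) 0 with hc | hc
  · rw [hc, map_zero, hgdef] at hgC
    obtain ⟨ha0, hb0⟩ := not_square a b (sub_eq_zero.1 hgC)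
    apply hq₀ne
    rw [hab, ha0, hb0, map_zero, zero_mul, add_zero]
  · have hgI : toT g ∈ I := by rw [hg]; exact I.mul_mem_right _ hq₀I
    rw [hgC, toT_C] at hgI
    have hone : (1 : T) ∈ I := by
      have hmul := I.mul_mem_left (CT (MvPolynomial.coeff 0 g)⁻¹) hgI
      rwa [CT, ← map_mul, inv_mul_cancel₀ hc, map_one] at hmul
    exact htop ((Ideal.eq_top_iff_one I).2 hone)
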